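/- The form 𝒜_{h,ω} is Hermitian: for all z̃, w̃ ∈ W̃_ω one has 𝒜_{h,ω}(z̃, w̃) = conj(𝒜_{h,ω}(w̃, z̃)); in particular 𝒜_{h,ω}(z̃, z̃) ∈ ℝ for every z̃ ∈ W̃_ω. -/

import Mathlib

open Matrix

namespace DHS

/-- The ambient space of pairs of sequences `x, y : ℤ → ℂ^m`. -/
abbrev V (m : ℕ) := (ℤ → Fin m → ℂ) × (ℤ → Fin m → ℂ)

/-- The standard symplectic matrix `J = [[0, -I_m],[I_m, 0]]` in `m × m` blocks. -/
def Jm (m : ℕ) : Matrix (Fin m ⊕ Fin m) (Fin m ⊕ Fin m) ℂ :=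
  Matrix.fromBlocks 0 (-1) 1 0

/-- `z_n = (x_n, y_n) ∈ ℂ^{2m}`. -/
def zf {m : ℕ} (z : V m) (n : ℤ) : Fin m ⊕ Fin m → ℂ := Sum.elim (z.1 n) (z.2 n)

/-- `z̃_n = (x_{n+1}, y_n) ∈ ℂ^{2m}`. -/
def zt {m : ℕ} (z : V m) (n : ℤ) : Fin m ⊕ Fin m → ℂ := Sum.elim (z.1 (n + 1)) (z.2 n)

/-- The standard Hermitian product `⟨u, v⟩ = Σ_i u_i · conj (v_i)` on `ℂ^{2m}`. -/
noncomputable def herm {α : Type} [Fintype α] (u v : α → ℂ) : ℂ :=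
  ∑ i, u i * (starRingEnd ℂ) (v i)

/-- The space `W̃_ω` of pairs of sequences with `x_{n+N} = ω x_n`, `y_{n+N} = ω y_n`. -/
noncomputable def Wt (m N : ℕ) (ω : ℂ) : Submodule ℂ (V m) where
  carrier := {z | ∀ n : ℤ, z.1 (n + (N : ℤ)) = ω • z.1 n ∧ z.2 (n + (N : ℤ)) = ω • z.2 n}
  add_mem' := by
    intro a b ha hb n
    refine ⟨?_, ?_⟩
    · show (a.1 + b.1) (n + (N : ℤ)) = ω • (a.1 + b.1) n
      simp [Pi.add_apply, (ha n).1, (hb n).1, smul_add]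
    · show (a.2 + b.2) (n + (N : ℤ)) = ω • (a.2 + b.2) n
      simp [Pi.add_apply, (ha n).2, (hb n).2, smul_add]
  zero_mem' := by intro n; simp
  smul_mem' := by
    intro c a ha n
    refine ⟨?_, ?_⟩
    · show (c • a.1) (n + (N : ℤ)) = ω • (c • a.1) n
      simp [Pi.smul_apply, (ha n).1, smul_comm c ω]
    · show (c • a.2) (n + (N : ℤ)) = ω • (c • a.2) n
      simp [Pi.smul_apply, (ha n).2, smul_comm c ω]

/-- The form `𝒜_{h,ω}(z̃, w̃) = Σ_{n=1}^{N} [⟨−J(z_{n+1}−z_n)/h, w̃_n⟩ − ⟨B_n z̃_n, w̃_n⟩]`. -/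
noncomputable def Aform (m N : ℕ) (h : ℝ)
    (B : ℤ → Matrix (Fin m ⊕ Fin m) (Fin m ⊕ Fin m) ℝ) (z w : V m) : ℂ :=
  ∑ n ∈ Finset.Icc (1 : ℤ) (N : ℤ),
    (herm (((h : ℂ))⁻¹ • ((-(Jm m)).mulVec (zf z (n + 1) - zf z n))) (zt w n)
      - herm (((B n).map (fun x => (x : ℂ))).mulVec (zt z n)) (zt w n))

lemma herm_add_left {α : Type} [Fintype α] (u v w : α → ℂ) :
    herm (u + v) w = herm u w + herm v w := by
  simp [herm, add_mul, Finset.sum_add_distrib]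

lemma herm_smul_left {α : Type} [Fintype α] (c : ℂ) (u w : α → ℂ) :
    herm (c • u) w = c * herm u w := by
  simp [herm, Finset.mul_sum, mul_assoc]

lemma herm_zero_left {α : Type} [Fintype α] (w : α → ℂ) : herm 0 w = 0 := by
  simp [herm]

lemma zf_add {m : ℕ} (a b : V m) (n : ℤ) : zf (a + b) n = zf a n + zf b n := by
  funext i; cases i <;> rfl

lemma zf_smul {m : ℕ} (c : ℂ) (a : V m) (n : ℤ) : zf (c • a) n = c • zf a n := by
  funext i; cases i <;> rfl

lemma zf_zero {m : ℕ} (n : ℤ) : zf (0 : V m) n = 0 := by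
  funext i; cases i <;> rfl

lemma zt_add {m : ℕ} (a b : V m) (n : ℤ) : zt (a + b) n = zt a n + zt b n := by
  funext i; cases i <;> rfl

lemma zt_smul {m : ℕ} (c : ℂ) (a : V m) (n : ℤ) : zt (c • a) n = c • zt a n := by
  funext i; cases i <;> rfl

lemma zt_zero {m : ℕ} (n : ℤ) : zt (0 : V m) n = 0 := by
  funext i; cases i <;> rfl

lemma Aform_add_left (m N : ℕ) (h : ℝ)
    (B : ℤ → Matrix (Fin m ⊕ Fin m) (Fin m ⊕ Fin m) ℝ) (a b w : V m) :
    Aform m N h B (a + b) w = Aform m N h B a w + Aform m N h B b w := by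
  unfold Aform
  rw [← Finset.sum_add_distrib]
  refine Finset.sum_congr rfl fun n _ => ?_
  rw [zf_add, zf_add, zt_add, add_sub_add_comm, Matrix.mulVec_add, smul_add, herm_add_left,
    Matrix.mulVec_add, herm_add_left]
  ring

lemma Aform_smul_left (m N : ℕ) (h : ℝ)
    (B : ℤ → Matrix (Fin m ⊕ Fin m) (Fin m ⊕ Fin m) ℝ) (c : ℂ) (a w : V m) :
    Aform m N h B (c • a) w = c * Aform m N h B a w := by
  unfold Aform
  rw [Finset.mul_sum]
  refine Finset.sum_congr rfl fun n _ => ?_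
  rw [zf_smul, zf_smul, zt_smul, ← smul_sub]
  simp only [Matrix.mulVec_smul, smul_comm ((h : ℂ))⁻¹ c, herm_smul_left]
  ring

lemma Aform_zero_left (m N : ℕ) (h : ℝ)
    (B : ℤ → Matrix (Fin m ⊕ Fin m) (Fin m ⊕ Fin m) ℝ) (w : V m) :
    Aform m N h B (0 : V m) w = 0 := by
  unfold Aform
  refine Finset.sum_eq_zero fun n _ => ?_
  rw [zf_zero, zf_zero, zt_zero]
  simp [herm_zero_left]

/-- The null space `{z̃ ∈ W̃_ω : 𝒜_{h,ω}(z̃, w̃) = 0 for all w̃ ∈ W̃_ω}`. -/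
noncomputable def nullSp (m N : ℕ) (h : ℝ) (ω : ℂ)
    (B : ℤ → Matrix (Fin m ⊕ Fin m) (Fin m ⊕ Fin m) ℝ) : Submodule ℂ (V m) where
  carrier := {z | z ∈ Wt m N ω ∧ ∀ w ∈ Wt m N ω, Aform m N h B z w = 0}
  add_mem' := by
    intro a b ha hb
    exact ⟨(Wt m N ω).add_mem ha.1 hb.1, fun w hw => by
      rw [Aform_add_left, ha.2 w hw, hb.2 w hw, add_zero]⟩
  zero_mem' := ⟨(Wt m N ω).zero_mem, fun w _ => Aform_zero_left m N h B w⟩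
  smul_mem' := by
    intro c a ha
    exact ⟨(Wt m N ω).smul_mem c ha.1, fun w hw => by
      rw [Aform_smul_left, ha.2 w hw, mul_zero]⟩

/-- `m⁰_{h,ω}`: the dimension of the null space of `𝒜_{h,ω}`. -/
noncomputable def mZero (m N : ℕ) (h : ℝ) (ω : ℂ)
    (B : ℤ → Matrix (Fin m ⊕ Fin m) (Fin m ⊕ Fin m) ℝ) : ℕ :=
  Module.finrank ℂ ↥(nullSp m N h ω B)

/-- `m⁺_{h,ω}`: the maximal dimension of a complex subspace of `W̃_ω` on which
`z̃ ↦ 𝒜_{h,ω}(z̃, z̃)` is positive definite. -/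
noncomputable def mPlus (m N : ℕ) (h : ℝ) (ω : ℂ)
    (B : ℤ → Matrix (Fin m ⊕ Fin m) (Fin m ⊕ Fin m) ℝ) : ℕ :=
  sSup {d : ℕ | ∃ S : Submodule ℂ (V m), S ≤ Wt m N ω ∧ Module.finrank ℂ ↥S = d ∧
    ∀ z ∈ S, z ≠ 0 → 0 < (Aform m N h B z z).re}

/-- `m⁻_{h,ω}`: the maximal dimension of a complex subspace of `W̃_ω` on which
`z̃ ↦ 𝒜_{h,ω}(z̃, z̃)` is negative definite. -/
noncomputable def mMinus (m N : ℕ) (h : ℝ) (ω : ℂ)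
    (B : ℤ → Matrix (Fin m ⊕ Fin m) (Fin m ⊕ Fin m) ℝ) : ℕ :=
  sSup {d : ℕ | ∃ S : Submodule ℂ (V m), S ≤ Wt m N ω ∧ Module.finrank ℂ ↥S = d ∧
    ∀ z ∈ S, z ≠ 0 → (Aform m N h B z z).re < 0}


lemma herm_conj {α : Type} [Fintype α] (u v : α → ℂ) :
    (starRingEnd ℂ) (herm u v) = herm v u := by
  simp [herm, map_sum, mul_comm]

lemma herm_sub_left {α : Type} [Fintype α] (u v w : α → ℂ) :
    herm (u - v) w = herm u w - herm v w := by
  simp [herm, sub_mul, Finset.sum_sub_distrib]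

lemma herm_sub_right {α : Type} [Fintype α] (u v w : α → ℂ) :
    herm u (v - w) = herm u v - herm u w := by
  simp [herm, mul_sub, Finset.sum_sub_distrib]

lemma herm_neg_left {α : Type} [Fintype α] (u w : α → ℂ) :
    herm (-u) w = - herm u w := by
  simp [herm]

lemma herm_neg_right {α : Type} [Fintype α] (u w : α → ℂ) :
    herm u (-w) = - herm u w := by
  simp [herm]

lemma herm_elim {m : ℕ} (a b c d : Fin m → ℂ) :
    herm (Sum.elim a b) (Sum.elim c d) = herm a c + herm b d := by
  simp [herm, Fintype.sum_sum_type]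

lemma negJ_mulVec {m : ℕ} (a b : Fin m → ℂ) :
    (-(Jm m)).mulVec (Sum.elim a b) = Sum.elim b (-a) := by
  unfold Jm
  rw [Matrix.fromBlocks_neg, Matrix.fromBlocks_mulVec]
  simp [Matrix.neg_mulVec]

lemma zf_sub_elim {m : ℕ} (a : V m) (k : ℤ) :
    zf a (k + 1) - zf a k = Sum.elim (a.1 (k + 1) - a.1 k) (a.2 (k + 1) - a.2 k) := by
  funext i; cases i <;> rfl

lemma herm_mulVec_symm {α : Type} [Fintype α] [DecidableEq α]
    (R : Matrix α α ℝ) (hR : Rᵀ = R) (u v : α → ℂ) :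
    herm ((R.map (fun x => (x : ℂ))).mulVec u) v
      = (starRingEnd ℂ) (herm ((R.map (fun x => (x : ℂ))).mulVec v) u) := by
  simp only [herm, Matrix.mulVec, dotProduct, Matrix.map_apply, map_sum, _root_.map_mul,
    Complex.conj_ofReal, Complex.conj_conj, Finset.sum_mul]
  rw [Finset.sum_comm]
  refine Finset.sum_congr rfl fun i _ => Finset.sum_congr rfl fun j _ => ?_
  have hij := congrFun (congrFun hR i) j
  simp only [Matrix.transpose_apply] at hij
  rw [hij]
  ring

lemma Jterm_key {m : ℕ} (z w : V m) (n : ℤ) :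
    herm ((-(Jm m)).mulVec (zf z (n + 1) - zf z n)) (zt w n)
      - (starRingEnd ℂ) (herm ((-(Jm m)).mulVec (zf w (n + 1) - zf w n)) (zt z n))
    = (herm (z.2 (n + 1)) (w.1 (n + 1)) - herm (z.1 (n + 1)) (w.2 (n + 1)))
      - (herm (z.2 n) (w.1 n) - herm (z.1 n) (w.2 n)) := by
  rw [zf_sub_elim, zf_sub_elim, negJ_mulVec, negJ_mulVec]
  simp only [zt, herm_elim, map_add, map_sub, map_neg, herm_conj, herm_sub_left,
    herm_sub_right, herm_neg_left, herm_neg_right]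
  ring

lemma tele (G : ℤ → ℂ) (N : ℕ) :
    ∑ n ∈ Finset.Icc (1 : ℤ) (N : ℤ), (G (n + 1) - G n) = G ((N : ℤ) + 1) - G 1 := by
  induction N with
  | zero => simp
  | succ k ih =>
      have hins : Finset.Icc (1 : ℤ) ((k + 1 : ℕ) : ℤ)
          = insert ((k : ℤ) + 1) (Finset.Icc (1 : ℤ) (k : ℤ)) := by
        ext x; simp only [Finset.mem_Icc, Finset.mem_insert]; push_cast; omega
      have hnot : ((k : ℤ) + 1) ∉ Finset.Icc (1 : ℤ) (k : ℤ) := by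
        simp only [Finset.mem_Icc]; omega
      rw [hins, Finset.sum_insert hnot, ih]
      push_cast
      ring

lemma herm_smul_right' {α : Type} [Fintype α] (c : ℂ) (u w : α → ℂ) :
    herm u (c • w) = (starRingEnd ℂ) c * herm u w := by
  simp [herm, Finset.mul_sum]; ring_nf
  exact Finset.sum_congr rfl fun i _ => by ring


/-- the form `𝒜_{h,ω}` is Hermitian; in particular `𝒜_{h,ω}(z̃,z̃)` is real. -/
theorem stmt3 (m N : ℕ) (hm : 1 ≤ m) (hN : 1 ≤ N) (h : ℝ) (hh : 0 < h)
    (ω : ℂ) (hω : ‖ω‖ = 1)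
    (B : ℤ → Matrix (Fin m ⊕ Fin m) (Fin m ⊕ Fin m) ℝ)
    (hBsym : ∀ n : ℤ, (B n)ᵀ = B n) (hBper : ∀ n : ℤ, B (n + (N : ℤ)) = B n) :
    (∀ z ∈ Wt m N ω, ∀ w ∈ Wt m N ω,
      Aform m N h B z w = (starRingEnd ℂ) (Aform m N h B w z)) ∧
    (∀ z ∈ Wt m N ω, (Aform m N h B z z).im = 0) := by
  have hωc : ω * (starRingEnd ℂ) ω = 1 := by
    rw [Complex.mul_conj]
    rw [Complex.normSq_eq_norm_sq, hω]
    norm_num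
  have main : ∀ z ∈ Wt m N ω, ∀ w ∈ Wt m N ω,
      Aform m N h B z w = (starRingEnd ℂ) (Aform m N h B w z) := by
    intro z hz w hw
    have hsm : ∀ a b : Fin m → ℂ, herm (ω • a) (ω • b) = herm a b := by
      intro a b
      rw [herm_smul_left, herm_smul_right', ← mul_assoc, hωc, one_mul]
    set G : ℤ → ℂ := fun n => herm (z.2 n) (w.1 n) - herm (z.1 n) (w.2 n) with hG
    rw [← sub_eq_zero]
    unfold Aform
    rw [map_sum, ← Finset.sum_sub_distrib]
    have hterm : ∀ n ∈ Finset.Icc (1 : ℤ) (N : ℤ),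
        ((herm (((h : ℂ))⁻¹ • ((-(Jm m)).mulVec (zf z (n + 1) - zf z n))) (zt w n)
            - herm (((B n).map (fun x => (x : ℂ))).mulVec (zt z n)) (zt w n))
          - (starRingEnd ℂ)
              (herm (((h : ℂ))⁻¹ • ((-(Jm m)).mulVec (zf w (n + 1) - zf w n))) (zt z n)
                - herm (((B n).map (fun x => (x : ℂ))).mulVec (zt w n)) (zt z n)))
        = ((h : ℂ))⁻¹ * (G (n + 1) - G n) := by
      intro n _
      rw [map_sub, herm_smul_left, herm_smul_left, _root_.map_mul,
        ← herm_mulVec_symm (B n) (hBsym n)]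
      have hc : (starRingEnd ℂ) (((h : ℂ))⁻¹) = ((h : ℂ))⁻¹ := by
        rw [map_inv₀, Complex.conj_ofReal]
      rw [hc]
      have hk := Jterm_key z w n
      have hGdef : G (n + 1) - G n
          = (herm (z.2 (n + 1)) (w.1 (n + 1)) - herm (z.1 (n + 1)) (w.2 (n + 1)))
            - (herm (z.2 n) (w.1 n) - herm (z.1 n) (w.2 n)) := by rw [hG]
      rw [hGdef]
      linear_combination ((h : ℂ))⁻¹ * hk
    rw [Finset.sum_congr rfl hterm, ← Finset.mul_sum, tele]
    have hzp : ∀ n : ℤ, z.1 (n + (N : ℤ)) = ω • z.1 n ∧ z.2 (n + (N : ℤ)) = ω • z.2 n := hz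
    have hwp : ∀ n : ℤ, w.1 (n + (N : ℤ)) = ω • w.1 n ∧ w.2 (n + (N : ℤ)) = ω • w.2 n := hw
    have hGper : G ((N : ℤ) + 1) = G 1 := by
      rw [hG]
      simp only
      rw [add_comm (N : ℤ) 1, (hzp 1).1, (hzp 1).2, (hwp 1).1, (hwp 1).2, hsm, hsm]
    rw [hGper, sub_self, mul_zero]
  refine ⟨main, fun z hz => ?_⟩
  have := main z hz z hz
  exact Complex.conj_eq_iff_im.mp this.symm


end DHS
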